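/- Let G be a graph on [n] and 1 ≤ k ≤ ⌊n/2⌋. If λ is an eigenvalue of L_k(G) admitting an eigenvector φ with B_{n,k,k−1}ᵀ φ = 0, then λ ≥ k·(λ₂(L(G)) − k + 1), where λ₂(L(G)) is the second smallest eigenvalue of the Laplacian of G. -/

import Mathlib

open Finset Matrix

/-- The `k`-th token graph of a graph `G` on `[n]` = `Fin n`: vertices are the `k`-subsets of
`[n]`, and `A, B` are adjacent iff `|A ∩ B| = k - 1` and `A △ B` is an edge of `G`. -/
def tokenGraph (n k : ℕ) (G : SimpleGraph (Fin n)) :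
    SimpleGraph {s : Finset (Fin n) // s.card = k} :=
  SimpleGraph.fromRel (fun A B =>
    (A.1 ∩ B.1).card = k - 1 ∧ ∃ u v, G.Adj u v ∧ symmDiff A.1 B.1 = {u, v})

noncomputable instance (n k : ℕ) (G : SimpleGraph (Fin n)) :
    DecidableRel (tokenGraph n k G).Adj := Classical.decRel _

/-- Laplacian matrix of the `k`-th token graph. -/
noncomputable def lapTok (n k : ℕ) (G : SimpleGraph (Fin n)) :
    Matrix {s : Finset (Fin n) // s.card = k} {s : Finset (Fin n) // s.card = k} ℝ :=
  SimpleGraph.lapMatrix ℝ (tokenGraph n k G)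

/-- The inclusion matrix `B_{n,k,l}` of `l`-subsets into `k`-subsets of `[n]`. -/
def inclMatrix (n k l : ℕ) :
    Matrix {s : Finset (Fin n) // s.card = k} {s : Finset (Fin n) // s.card = l} ℝ :=
  fun σ η => if η.1 ⊆ σ.1 then 1 else 0

/-- The second smallest eigenvalue (with multiplicity) of a Hermitian real matrix:
the infimum over pairs of distinct indices of the larger of the two corresponding
eigenvalues. -/
noncomputable def lamSecond {V : Type*} [Fintype V] [DecidableEq V] {M : Matrix V V ℝ}
    (hM : M.IsHermitian) : ℝ :=
  sInf {y : ℝ | ∃ i j : V, i ≠ j ∧ y = max (hM.eigenvalues i) (hM.eigenvalues j)}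

lemma lamSecond_le {V : Type*} [Fintype V] [DecidableEq V] {M : Matrix V V ℝ}
    (hM : M.IsHermitian) {i j : V} (hij : i ≠ j) :
    lamSecond hM ≤ max (hM.eigenvalues i) (hM.eigenvalues j) := by
  apply csInf_le
  · apply Set.Finite.bddBelow
    have : {y : ℝ | ∃ i j : V, i ≠ j ∧ y = max (hM.eigenvalues i) (hM.eigenvalues j)} ⊆
        (fun p : V × V => max (hM.eigenvalues p.1) (hM.eigenvalues p.2)) '' Set.univ := by
      rintro y ⟨i, j, _, rfl⟩; exact ⟨(i, j), trivial, rfl⟩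
    exact Set.Finite.subset (Set.Finite.image _ (Set.finite_univ)) this
  · exact ⟨i, j, hij, rfl⟩

section quad
variable {V : Type*} [Fintype V] [DecidableEq V] {M : Matrix V V ℝ} (hM : M.IsHermitian)

lemma star_mulVec_eq (x : V → ℝ) :
    (star (hM.eigenvectorUnitary : Matrix V V ℝ)) *ᵥ x
      = x ᵥ* (hM.eigenvectorUnitary : Matrix V V ℝ) := by
  rw [Matrix.star_eq_conjTranspose, Matrix.conjTranspose_eq_transpose_of_trivial,
    Matrix.mulVec_transpose]

lemma quad_eq (x : V → ℝ) :
    x ⬝ᵥ (M *ᵥ x) =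
      ∑ i, hM.eigenvalues i * ((star (hM.eigenvectorUnitary : Matrix V V ℝ)) *ᵥ x) i ^ 2 := by
  set U : Matrix V V ℝ := (hM.eigenvectorUnitary : Matrix V V ℝ) with hU
  set c : V → ℝ := star U *ᵥ x with hc
  have h1 : M *ᵥ x = U *ᵥ (diagonal (RCLike.ofReal ∘ hM.eigenvalues) *ᵥ c) := by
    rw [hc, mulVec_mulVec, mulVec_mulVec]
    conv_lhs => rw [hM.spectral_theorem]
    rfl
  rw [h1, dotProduct_mulVec, ← star_mulVec_eq hM, ← hc]
  simp only [dotProduct, mulVec_diagonal, Function.comp_apply, RCLike.ofReal_real_eq_id, id_eq]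
  exact Finset.sum_congr rfl fun i _ => by ring

lemma norm_eq (x : V → ℝ) :
    x ⬝ᵥ x = ∑ i, ((star (hM.eigenvectorUnitary : Matrix V V ℝ)) *ᵥ x) i ^ 2 := by
  set U : Matrix V V ℝ := (hM.eigenvectorUnitary : Matrix V V ℝ) with hU
  have h1 : x ⬝ᵥ (U *ᵥ (star U *ᵥ x)) = x ⬝ᵥ x := by
    rw [mulVec_mulVec, (Matrix.mem_unitaryGroup_iff).mp hM.eigenvectorUnitary.2, one_mulVec]
  calc x ⬝ᵥ x = x ⬝ᵥ (U *ᵥ (star U *ᵥ x)) := h1.symm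
    _ = (x ᵥ* U) ⬝ᵥ (star U *ᵥ x) := dotProduct_mulVec _ _ _
    _ = (star U *ᵥ x) ⬝ᵥ (star U *ᵥ x) := by rw [← star_mulVec_eq hM]
    _ = ∑ i, (star U *ᵥ x) i ^ 2 := by
        simp only [dotProduct]; exact Finset.sum_congr rfl fun i _ => (sq _).symm

lemma dot_invariant (x y : V → ℝ) :
    ((star (hM.eigenvectorUnitary : Matrix V V ℝ)) *ᵥ x) ⬝ᵥ
      ((star (hM.eigenvectorUnitary : Matrix V V ℝ)) *ᵥ y) = x ⬝ᵥ y := by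
  rw [star_mulVec_eq hM x, dotProduct_mulVec, vecMul_vecMul,
    (Matrix.mem_unitaryGroup_iff).mp hM.eigenvectorUnitary.2, vecMul_one]

end quad

lemma rayleigh_aux {V : Type*} [Fintype V] [DecidableEq V] (μ d c : V → ℝ)
    (hμ : ∀ i, 0 ≤ μ i) (hμd : ∀ i, μ i * d i = 0) (hcd : ∑ i, c i * d i = 0)
    (hd : ∃ i, d i ≠ 0) (lam2 : ℝ)
    (hlam2 : ∀ i j, i ≠ j → lam2 ≤ max (μ i) (μ j)) :
    lam2 * ∑ i, (c i)^2 ≤ ∑ i, μ i * (c i)^2 := by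
  by_cases h2 : ∃ i j, i ≠ j ∧ d i ≠ 0 ∧ d j ≠ 0
  · obtain ⟨i, j, hij, hdi, hdj⟩ := h2
    have hμi : μ i = 0 := by
      have := hμd i; rcases mul_eq_zero.mp this with h | h; exact h; exact absurd h hdi
    have hμj : μ j = 0 := by
      have := hμd j; rcases mul_eq_zero.mp this with h | h; exact h; exact absurd h hdj
    have h0 : lam2 ≤ 0 := by have := hlam2 i j hij; rw [hμi, hμj] at this; simpa using this
    have h1 : lam2 * ∑ i, (c i)^2 ≤ 0 :=
      mul_nonpos_of_nonpos_of_nonneg h0 (Finset.sum_nonneg fun i _ => sq_nonneg _)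
    exact h1.trans (Finset.sum_nonneg fun i _ => mul_nonneg (hμ i) (sq_nonneg _))
  · push_neg at h2
    obtain ⟨j₀, hj₀⟩ := hd
    have hone : ∀ i, i ≠ j₀ → d i = 0 := fun i hi => by
      by_contra h; exact hj₀ (h2 i j₀ hi h)
    have hcj₀ : c j₀ = 0 := by
      have : ∑ i, c i * d i = c j₀ * d j₀ := by
        apply Finset.sum_eq_single
        · intro i _ hi; rw [hone i hi, mul_zero]
        · intro h; exact absurd (Finset.mem_univ j₀) h
      rw [hcd] at this
      rcases mul_eq_zero.mp this.symm with h | h; exact h; exact absurd h hj₀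
    have hμj₀ : μ j₀ = 0 := by
      rcases mul_eq_zero.mp (hμd j₀) with h | h; exact h; exact absurd h hj₀
    rw [Finset.mul_sum]
    apply Finset.sum_le_sum
    intro i _
    by_cases hi : i = j₀
    · subst hi; rw [hcj₀]; simp
    · have := hlam2 i j₀ hi
      rw [hμj₀, max_eq_left (hμ i)] at this
      exact mul_le_mul_of_nonneg_right this (sq_nonneg _)

lemma rayleigh {V : Type*} [Fintype V] [DecidableEq V] [Nonempty V]
    (G : SimpleGraph V) [DecidableRel G.Adj] (x : V → ℝ) (hx : ∑ v, x v = 0) :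
    lamSecond (SimpleGraph.posSemidef_lapMatrix ℝ G).isHermitian * (x ⬝ᵥ x) ≤
      x ⬝ᵥ (G.lapMatrix ℝ *ᵥ x) := by
  set hM := (SimpleGraph.posSemidef_lapMatrix ℝ G).isHermitian with hMdef
  set U : Matrix V V ℝ := (hM.eigenvectorUnitary : Matrix V V ℝ) with hU
  set c : V → ℝ := star U *ᵥ x with hc
  set d : V → ℝ := star U *ᵥ (fun _ => 1) with hdd
  have hμ : ∀ i, 0 ≤ hM.eigenvalues i := fun i =>
    (SimpleGraph.posSemidef_lapMatrix ℝ G).eigenvalues_nonneg i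
  have hdiag : diagonal (RCLike.ofReal ∘ hM.eigenvalues) *ᵥ d = 0 := by
    rw [hdd, mulVec_mulVec, ← hM.conjStarAlgAut_star_eigenvectorUnitary]
    simp only [Unitary.conjStarAlgAut_apply, Unitary.coe_star, star_star]
    rw [← hU]
    have : star U * G.lapMatrix ℝ * U * star U = star U * G.lapMatrix ℝ := by
      rw [mul_assoc (star U * G.lapMatrix ℝ),
        (Matrix.mem_unitaryGroup_iff).mp hM.eigenvectorUnitary.2, mul_one]
    rw [this, ← mulVec_mulVec, SimpleGraph.lapMatrix_mulVec_const_eq_zero, mulVec_zero]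
  have hμd : ∀ i, hM.eigenvalues i * d i = 0 := by
    intro i
    have := congrFun hdiag i
    simpa [mulVec_diagonal] using this
  have hcd : ∑ i, c i * d i = 0 := by
    have : c ⬝ᵥ d = x ⬝ᵥ (fun _ => 1) := dot_invariant hM x _
    simpa [dotProduct, hx] using this
  have hd : ∃ i, d i ≠ 0 := by
    by_contra h
    push_neg at h
    have hd0 : d = 0 := funext h
    have h1 : U *ᵥ d = (fun _ => 1 : V → ℝ) := by
      rw [hdd, mulVec_mulVec, (Matrix.mem_unitaryGroup_iff).mp hM.eigenvectorUnitary.2,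
        one_mulVec]
    rw [hd0, mulVec_zero] at h1
    obtain ⟨v⟩ := ‹Nonempty V›
    exact one_ne_zero (congrFun h1.symm v)
  have key := rayleigh_aux hM.eigenvalues d c hμ hμd hcd hd
    (lamSecond hM) (fun i j hij => lamSecond_le hM hij)
  rw [quad_eq hM x, norm_eq hM x]
  exact key

section comb
variable {n k : ℕ}

/-- Totalized insertion map from (k-1)-subsets to k-subsets. -/
def tokIns (hk : 1 ≤ k) (A₀ : {s : Finset (Fin n) // s.card = k})
    (S : {s : Finset (Fin n) // s.card = k - 1}) (v : Fin n) :
    {s : Finset (Fin n) // s.card = k} :=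
  if h : v ∈ S.1 then A₀
  else ⟨insert v S.1, by rw [Finset.card_insert_of_notMem h, S.2]; omega⟩

lemma tokIns_coe (hk : 1 ≤ k) (A₀ : {s : Finset (Fin n) // s.card = k})
    (S : {s : Finset (Fin n) // s.card = k - 1}) {v : Fin n} (hv : v ∉ S.1) :
    (tokIns hk A₀ S v).1 = insert v S.1 := by
  rw [tokIns, dif_neg hv]

/-- Totalized erasure map from k-subsets to (k-1)-subsets. -/
def tokErs (S₀ : {s : Finset (Fin n) // s.card = k - 1})
    (A : {s : Finset (Fin n) // s.card = k}) (v : Fin n) :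
    {s : Finset (Fin n) // s.card = k - 1} :=
  if h : v ∈ A.1 then ⟨A.1.erase v, by rw [Finset.card_erase_of_mem h, A.2]⟩ else S₀

lemma sum_row (hk : 1 ≤ k) (A₀ : {s : Finset (Fin n) // s.card = k})
    (S : {s : Finset (Fin n) // s.card = k - 1}) (φ : {s : Finset (Fin n) // s.card = k} → ℝ) :
    ∑ v : Fin n, (if v ∈ S.1 then 0 else φ (tokIns hk A₀ S v)) =
      ∑ A : {s : Finset (Fin n) // s.card = k}, (if S.1 ⊆ A.1 then φ A else 0) := by
  rw [Finset.sum_ite, Finset.sum_const_zero, zero_add]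
  rw [Finset.sum_ite, Finset.sum_const_zero, add_zero]
  apply Finset.sum_nbij (fun v => tokIns hk A₀ S v)
  · intro v hv
    simp only [Finset.mem_filter, Finset.mem_univ, true_and] at hv ⊢
    rw [tokIns_coe hk A₀ S hv]
    exact Finset.subset_insert _ _
  · intro v hv v' hv' h
    simp only [Finset.coe_filter, Finset.mem_univ, true_and, Set.mem_setOf_eq] at hv hv'
    have := congrArg Subtype.val h
    rw [tokIns_coe hk A₀ S hv, tokIns_coe hk A₀ S hv'] at this
    have hv1 : v ∈ insert v' S.1 := this ▸ Finset.mem_insert_self v S.1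
    rcases Finset.mem_insert.mp hv1 with h' | h'
    · exact h'
    · exact absurd h' hv
  · intro A hA
    simp only [Finset.coe_filter, Finset.mem_univ, true_and, Set.mem_setOf_eq] at hA
    have hcard : (A.1 \ S.1).card = 1 := by
      have h1 : (A.1 \ S.1).card + (A.1 ∩ S.1).card = A.1.card :=
        Finset.card_sdiff_add_card_inter _ _
      have h2 : A.1 ∩ S.1 = S.1 := Finset.inter_eq_right.mpr hA
      rw [h2, A.2, S.2] at h1
      omega
    obtain ⟨v, hv⟩ := Finset.card_eq_one.mp hcard
    have hvA : v ∈ A.1 := (Finset.mem_sdiff.mp (hv ▸ Finset.mem_singleton_self v)).1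
    have hvS : v ∉ S.1 := (Finset.mem_sdiff.mp (hv ▸ Finset.mem_singleton_self v)).2
    refine ⟨v, by simpa using hvS, ?_⟩
    apply Subtype.ext
    rw [tokIns_coe hk A₀ S hvS]
    apply Finset.eq_of_subset_of_card_le (Finset.insert_subset hvA hA)
    rw [Finset.card_insert_of_notMem hvS, A.2, S.2]
    omega
  · intro v hv; rfl

lemma sum_ins (hk : 1 ≤ k) (A₀ : {s : Finset (Fin n) // s.card = k})
    (S₀ : {s : Finset (Fin n) // s.card = k - 1})
    (g : {s : Finset (Fin n) // s.card = k} → ℝ) :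
    ∑ S : {s : Finset (Fin n) // s.card = k - 1}, ∑ v : Fin n,
        (if v ∈ S.1 then 0 else g (tokIns hk A₀ S v)) =
      (k : ℝ) * ∑ A : {s : Finset (Fin n) // s.card = k}, g A := by
  have hR : (k : ℝ) * ∑ A : {s : Finset (Fin n) // s.card = k}, g A =
      ∑ A : {s : Finset (Fin n) // s.card = k}, ∑ _v ∈ A.1, g A := by
    rw [Finset.mul_sum]
    refine Finset.sum_congr rfl fun A _ => ?_
    rw [Finset.sum_const, A.2, nsmul_eq_mul]
  have hL : ∀ S : {s : Finset (Fin n) // s.card = k - 1},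
      ∑ v : Fin n, (if v ∈ S.1 then 0 else g (tokIns hk A₀ S v)) =
        ∑ v ∈ Finset.univ.filter (fun v => v ∉ S.1), g (tokIns hk A₀ S v) := by
    intro S
    rw [Finset.sum_ite, Finset.sum_const_zero, zero_add]
  simp_rw [hL]
  rw [hR, Finset.sum_sigma', Finset.sum_sigma']
  apply Finset.sum_nbij' (fun p => ⟨tokIns hk A₀ p.1 p.2, p.2⟩)
    (fun q => ⟨tokErs S₀ q.1 q.2, q.2⟩)
  · rintro ⟨S, v⟩ hp
    simp only [Finset.mem_sigma, Finset.mem_univ, Finset.mem_filter, true_and] at hp ⊢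
    rw [tokIns_coe hk A₀ S hp]
    exact Finset.mem_insert_self _ _
  · rintro ⟨A, v⟩ hq
    simp only [Finset.mem_sigma, Finset.mem_univ, Finset.mem_filter, true_and] at hq ⊢
    rw [tokErs, dif_pos hq]
    exact Finset.notMem_erase _ _
  · rintro ⟨S, v⟩ hp
    simp only [Finset.mem_sigma, Finset.mem_univ, Finset.mem_filter, true_and] at hp
    have h1 : v ∈ (tokIns hk A₀ S v).1 := by
      rw [tokIns_coe hk A₀ S hp]; exact Finset.mem_insert_self _ _
    have : tokErs S₀ (tokIns hk A₀ S v) v = S := by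
      apply Subtype.ext
      rw [tokErs, dif_pos h1]
      simp only
      rw [tokIns_coe hk A₀ S hp, Finset.erase_insert hp]
    simp only [this]
  · rintro ⟨A, v⟩ hq
    simp only [Finset.mem_sigma, Finset.mem_univ, Finset.mem_filter, true_and] at hq
    have h1 : v ∉ (tokErs S₀ A v).1 := by
      rw [tokErs, dif_pos hq]; exact Finset.notMem_erase _ _
    have : tokIns hk A₀ (tokErs S₀ A v) v = A := by
      apply Subtype.ext
      rw [tokIns_coe hk A₀ _ h1, tokErs, dif_pos hq]
      simp only
      rw [Finset.insert_erase hq]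
    simp only [this]
  · rintro ⟨S, v⟩ hp; rfl

end comb

section adj
variable {n k : ℕ} {G : SimpleGraph (Fin n)}

lemma insert_inter_insert {S : Finset (Fin n)} {u v : Fin n} (hu : u ∉ S) (hv : v ∉ S)
    (huv : u ≠ v) : (insert u S) ∩ (insert v S) = S := by
  ext x
  simp only [Finset.mem_inter, Finset.mem_insert]
  constructor
  · rintro ⟨h1 | h1, h2 | h2⟩
    · exact absurd (h1.symm.trans h2) huv
    · exact absurd (h1 ▸ h2) hu
    · exact absurd (h2 ▸ h1) hv
    · exact h1
  · intro h; exact ⟨Or.inr h, Or.inr h⟩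

lemma insert_sdiff_insert'' {S : Finset (Fin n)} {u v : Fin n} (hu : u ∉ S) (hv : v ∉ S)
    (huv : u ≠ v) : insert u S \ insert v S = {u} := by
  ext x
  simp only [Finset.mem_sdiff, Finset.mem_insert, Finset.mem_singleton, not_or]
  constructor
  · rintro ⟨h1 | h1, h2, h3⟩
    · exact h1
    · exact absurd h1 h3
  · rintro rfl
    exact ⟨Or.inl rfl, huv, hu⟩

lemma tokAdj_of (hk : 1 ≤ k) (A₀ : {s : Finset (Fin n) // s.card = k})
    (S : {s : Finset (Fin n) // s.card = k - 1}) {u v : Fin n}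
    (hu : u ∉ S.1) (hv : v ∉ S.1) (hadj : G.Adj u v) :
    (tokenGraph n k G).Adj (tokIns hk A₀ S u) (tokIns hk A₀ S v) := by
  have huv : u ≠ v := hadj.ne
  have hA : (tokIns hk A₀ S u).1 = insert u S.1 := tokIns_coe hk A₀ S hu
  have hB : (tokIns hk A₀ S v).1 = insert v S.1 := tokIns_coe hk A₀ S hv
  rw [tokenGraph, SimpleGraph.fromRel_adj]
  constructor
  · intro h
    have : u ∈ insert v S.1 := by
      rw [← hB, ← congrArg Subtype.val h, hA]; exact Finset.mem_insert_self _ _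
    rcases Finset.mem_insert.mp this with h' | h'
    · exact huv h'
    · exact hu h'
  · left
    refine ⟨?_, u, v, hadj, ?_⟩
    · rw [hA, hB, insert_inter_insert hu hv huv, S.2]
    · rw [hA, hB, symmDiff_def, insert_sdiff_insert'' hu hv huv,
        insert_sdiff_insert'' hv hu huv.symm, Finset.sup_eq_union]
      ext x; simp

lemma tokAdj_elim (hk : 1 ≤ k) {A B : {s : Finset (Fin n) // s.card = k}}
    (h : (tokenGraph n k G).Adj A B) :
    ∃ a b : Fin n, a ∉ A.1 ∩ B.1 ∧ b ∉ A.1 ∩ B.1 ∧ G.Adj a b ∧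
      (A.1 ∩ B.1).card = k - 1 ∧ A.1 = insert a (A.1 ∩ B.1) ∧ B.1 = insert b (A.1 ∩ B.1) := by
  rw [tokenGraph, SimpleGraph.fromRel_adj] at h
  obtain ⟨hne, hrel⟩ := h
  have hI : (A.1 ∩ B.1).card = k - 1 := by
    rcases hrel with ⟨h1, _⟩ | ⟨h1, _⟩
    · exact h1
    · rwa [Finset.inter_comm]
  have hsd : ∃ u v, G.Adj u v ∧ symmDiff A.1 B.1 = {u, v} := by
    rcases hrel with ⟨_, u, v, hadj, h2⟩ | ⟨_, u, v, hadj, h2⟩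
    · exact ⟨u, v, hadj, h2⟩
    · exact ⟨u, v, hadj, by rwa [symmDiff_comm]⟩
  have hAcard : (A.1 \ B.1).card = 1 := by
    have h1 := Finset.card_sdiff_add_card_inter A.1 B.1
    rw [hI, A.2] at h1; omega
  have hBcard : (B.1 \ A.1).card = 1 := by
    have h1 := Finset.card_sdiff_add_card_inter B.1 A.1
    rw [Finset.inter_comm, hI, B.2] at h1; omega
  obtain ⟨a, ha⟩ := Finset.card_eq_one.mp hAcard
  obtain ⟨b, hb⟩ := Finset.card_eq_one.mp hBcard
  have haA : a ∈ A.1 := (Finset.mem_sdiff.mp (ha ▸ Finset.mem_singleton_self a)).1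
  have haB : a ∉ B.1 := (Finset.mem_sdiff.mp (ha ▸ Finset.mem_singleton_self a)).2
  have hbB : b ∈ B.1 := (Finset.mem_sdiff.mp (hb ▸ Finset.mem_singleton_self b)).1
  have hbA : b ∉ A.1 := (Finset.mem_sdiff.mp (hb ▸ Finset.mem_singleton_self b)).2
  have hab : a ≠ b := fun hEq => haB (hEq ▸ hbB)
  have hsdeq : symmDiff A.1 B.1 = {a, b} := by
    rw [symmDiff_def, Finset.sup_eq_union, ha, hb]
    ext x; simp
  have hadj : G.Adj a b := by
    obtain ⟨u, v, huv, heq⟩ := hsd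
    rw [hsdeq] at heq
    have hamem : a ∈ ({u, v} : Finset (Fin n)) := heq ▸ Finset.mem_insert_self a {b}
    have hbmem : b ∈ ({u, v} : Finset (Fin n)) :=
      heq ▸ Finset.mem_insert_of_mem (Finset.mem_singleton_self b)
    simp only [Finset.mem_insert, Finset.mem_singleton] at hamem hbmem
    rcases hamem with rfl | rfl
    · rcases hbmem with rfl | rfl
      · exact absurd rfl hab
      · exact huv
    · rcases hbmem with rfl | rfl
      · exact huv.symm
      · exact absurd rfl hab
  have haS : a ∉ A.1 ∩ B.1 := fun hmem => haB (Finset.mem_inter.mp hmem).2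
  have hbS : b ∉ A.1 ∩ B.1 := fun hmem => hbA (Finset.mem_inter.mp hmem).1
  refine ⟨a, b, haS, hbS, hadj, hI, ?_, ?_⟩
  · symm
    apply Finset.eq_of_subset_of_card_le
      (Finset.insert_subset haA Finset.inter_subset_left)
    rw [Finset.card_insert_of_notMem haS, A.2, hI]; omega
  · symm
    apply Finset.eq_of_subset_of_card_le
      (Finset.insert_subset hbB Finset.inter_subset_right)
    rw [Finset.card_insert_of_notMem hbS, B.2, hI]; omega

end adj

section t1
variable {n k : ℕ} {G : SimpleGraph (Fin n)} [DecidableRel G.Adj]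

lemma T1_eq (hk : 1 ≤ k) (A₀ : {s : Finset (Fin n) // s.card = k})
    (φ : {s : Finset (Fin n) // s.card = k} → ℝ) :
    ∑ S : {s : Finset (Fin n) // s.card = k - 1}, ∑ u : Fin n, ∑ v : Fin n,
      (if G.Adj u v ∧ u ∉ S.1 ∧ v ∉ S.1 then
        (φ (tokIns hk A₀ S u) - φ (tokIns hk A₀ S v))^2 else 0) =
    ∑ A : {s : Finset (Fin n) // s.card = k}, ∑ B : {s : Finset (Fin n) // s.card = k},
      (if (tokenGraph n k G).Adj A B then (φ A - φ B)^2 else 0) := by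
  classical
  have hL : (∑ S : {s : Finset (Fin n) // s.card = k - 1}, ∑ u : Fin n, ∑ v : Fin n,
      (if G.Adj u v ∧ u ∉ S.1 ∧ v ∉ S.1 then
        (φ (tokIns hk A₀ S u) - φ (tokIns hk A₀ S v))^2 else 0)) =
      ∑ p ∈ Finset.univ.filter
          (fun p : {s : Finset (Fin n) // s.card = k - 1} × Fin n × Fin n =>
            G.Adj p.2.1 p.2.2 ∧ p.2.1 ∉ p.1.1 ∧ p.2.2 ∉ p.1.1),
        (φ (tokIns hk A₀ p.1 p.2.1) - φ (tokIns hk A₀ p.1 p.2.2))^2 := by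
    rw [Finset.sum_filter, Fintype.sum_prod_type]
    refine Finset.sum_congr rfl fun S _ => ?_
    rw [Fintype.sum_prod_type]
  have hR : (∑ A : {s : Finset (Fin n) // s.card = k}, ∑ B : {s : Finset (Fin n) // s.card = k},
      (if (tokenGraph n k G).Adj A B then (φ A - φ B)^2 else 0)) =
      ∑ q ∈ Finset.univ.filter
          (fun q : {s : Finset (Fin n) // s.card = k} × {s : Finset (Fin n) // s.card = k} =>
            (tokenGraph n k G).Adj q.1 q.2),
        (φ q.1 - φ q.2)^2 := by
    rw [Finset.sum_filter, Fintype.sum_prod_type]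
  rw [hL, hR]
  apply Finset.sum_nbij (fun p => (tokIns hk A₀ p.1 p.2.1, tokIns hk A₀ p.1 p.2.2))
  · rintro ⟨S, u, v⟩ hp
    simp only [Finset.mem_filter, Finset.mem_univ, true_and] at hp ⊢
    exact tokAdj_of hk A₀ S hp.2.1 hp.2.2 hp.1
  · rintro ⟨S, u, v⟩ hp ⟨S', u', v'⟩ hp' heq
    simp only [Finset.coe_filter, Finset.mem_univ, true_and, Set.mem_setOf_eq] at hp hp'
    obtain ⟨hadj, hu, hv⟩ := hp
    obtain ⟨hadj', hu', hv'⟩ := hp'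
    simp only [Prod.mk.injEq] at heq
    obtain ⟨hAB1, hAB2⟩ := heq
    have hA1 := congrArg Subtype.val hAB1
    have hA2 := congrArg Subtype.val hAB2
    rw [tokIns_coe hk A₀ S hu, tokIns_coe hk A₀ S' hu'] at hA1
    rw [tokIns_coe hk A₀ S hv, tokIns_coe hk A₀ S' hv'] at hA2
    have hSS : S.1 = S'.1 := by
      have e1 : insert u S.1 ∩ insert v S.1 = S.1 :=
        insert_inter_insert hu hv hadj.ne
      have e2 : insert u' S'.1 ∩ insert v' S'.1 = S'.1 :=
        insert_inter_insert hu' hv' hadj'.ne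
      rw [← e1, ← e2, hA1, hA2]
    have hS : S = S' := Subtype.ext hSS
    subst hS
    have huu : u = u' := by
      have : u ∈ insert u' S.1 := hA1 ▸ Finset.mem_insert_self u S.1
      rcases Finset.mem_insert.mp this with h' | h'
      · exact h'
      · exact absurd h' hu
    have hvv : v = v' := by
      have : v ∈ insert v' S.1 := hA2 ▸ Finset.mem_insert_self v S.1
      rcases Finset.mem_insert.mp this with h' | h'
      · exact h'
      · exact absurd h' hv
    rw [Prod.mk.injEq, Prod.mk.injEq]
    exact ⟨rfl, huu, hvv⟩
  · rintro ⟨A, B⟩ hq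
    simp only [Finset.coe_filter, Finset.mem_univ, true_and, Set.mem_setOf_eq] at hq
    obtain ⟨a, b, haS, hbS, hadj, hI, hA, hB⟩ := tokAdj_elim hk hq
    refine ⟨(⟨A.1 ∩ B.1, hI⟩, a, b), ?_, ?_⟩
    · simp only [Finset.coe_filter, Finset.mem_univ, true_and, Set.mem_setOf_eq]
      exact ⟨hadj, haS, hbS⟩
    · simp only [Prod.mk.injEq]
      constructor
      · exact Subtype.ext (by rw [tokIns_coe hk A₀ _ haS]; exact hA.symm)
      · exact Subtype.ext (by rw [tokIns_coe hk A₀ _ hbS]; exact hB.symm)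
  · rintro ⟨S, u, v⟩ hp; rfl
end t1

section t2
variable {n k : ℕ} {G : SimpleGraph (Fin n)} [DecidableRel G.Adj]

lemma T2_le (hk : 1 ≤ k) (A₀ : {s : Finset (Fin n) // s.card = k})
    (S₀ : {s : Finset (Fin n) // s.card = k - 1})
    (φ : {s : Finset (Fin n) // s.card = k} → ℝ) :
    ∑ S : {s : Finset (Fin n) // s.card = k - 1}, ∑ u : Fin n, ∑ v : Fin n,
      (if G.Adj u v ∧ u ∈ S.1 ∧ v ∉ S.1 then (φ (tokIns hk A₀ S v))^2 else 0) ≤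
    ((k : ℝ) - 1) * ((k : ℝ) * ∑ A : {s : Finset (Fin n) // s.card = k}, φ A ^ 2) := by
  have step : ∀ S : {s : Finset (Fin n) // s.card = k - 1}, ∑ u : Fin n, ∑ v : Fin n,
      (if G.Adj u v ∧ u ∈ S.1 ∧ v ∉ S.1 then (φ (tokIns hk A₀ S v))^2 else 0) ≤
      ∑ v : Fin n, ((k : ℝ) - 1) *
        (if v ∈ S.1 then 0 else (φ (tokIns hk A₀ S v))^2) := by
    intro S
    rw [Finset.sum_comm]
    apply Finset.sum_le_sum
    intro v _
    set Cv : ℝ := if v ∈ S.1 then 0 else (φ (tokIns hk A₀ S v))^2 with hCv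
    have hCnn : 0 ≤ Cv := by rw [hCv]; positivity
    calc ∑ u : Fin n, (if G.Adj u v ∧ u ∈ S.1 ∧ v ∉ S.1 then (φ (tokIns hk A₀ S v))^2 else 0)
        ≤ ∑ u : Fin n, (if u ∈ S.1 then Cv else 0) := by
          apply Finset.sum_le_sum
          intro u _
          by_cases h : G.Adj u v ∧ u ∈ S.1 ∧ v ∉ S.1
          · rw [if_pos h, if_pos h.2.1, hCv, if_neg h.2.2]
          · rw [if_neg h]
            split <;> simp [hCnn]
      _ = (S.1.card : ℝ) * Cv := by
          rw [Finset.sum_ite_mem, Finset.univ_inter, Finset.sum_const, nsmul_eq_mul]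
      _ ≤ ((k : ℝ) - 1) * Cv := by
          apply mul_le_mul_of_nonneg_right _ hCnn
          rw [S.2, Nat.cast_sub hk, Nat.cast_one]
  calc _ ≤ ∑ S : {s : Finset (Fin n) // s.card = k - 1}, ∑ v : Fin n, ((k : ℝ) - 1) *
        (if v ∈ S.1 then 0 else (φ (tokIns hk A₀ S v))^2) := Finset.sum_le_sum fun S _ => step S
    _ = ((k : ℝ) - 1) * ((k : ℝ) * ∑ A : {s : Finset (Fin n) // s.card = k}, φ A ^ 2) := by
        simp_rw [← Finset.mul_sum]
        rw [sum_ins hk A₀ S₀ (fun A => φ A ^ 2)]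

lemma T3_le (hk : 1 ≤ k) (A₀ : {s : Finset (Fin n) // s.card = k})
    (S₀ : {s : Finset (Fin n) // s.card = k - 1})
    (φ : {s : Finset (Fin n) // s.card = k} → ℝ) :
    ∑ S : {s : Finset (Fin n) // s.card = k - 1}, ∑ u : Fin n, ∑ v : Fin n,
      (if G.Adj u v ∧ u ∉ S.1 ∧ v ∈ S.1 then (φ (tokIns hk A₀ S u))^2 else 0) ≤
    ((k : ℝ) - 1) * ((k : ℝ) * ∑ A : {s : Finset (Fin n) // s.card = k}, φ A ^ 2) := by
  have : ∀ S : {s : Finset (Fin n) // s.card = k - 1}, ∑ u : Fin n, ∑ v : Fin n,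
      (if G.Adj u v ∧ u ∉ S.1 ∧ v ∈ S.1 then (φ (tokIns hk A₀ S u))^2 else 0) =
      ∑ u : Fin n, ∑ v : Fin n,
      (if G.Adj u v ∧ u ∈ S.1 ∧ v ∉ S.1 then (φ (tokIns hk A₀ S v))^2 else 0) := by
    intro S
    rw [Finset.sum_comm]
    refine Finset.sum_congr rfl fun v _ => Finset.sum_congr rfl fun u _ => ?_
    congr 1
    rw [eq_iff_iff]
    constructor
    · rintro ⟨h1, h2, h3⟩; exact ⟨h1.symm, h3, h2⟩
    · rintro ⟨h1, h2, h3⟩; exact ⟨h1.symm, h3, h2⟩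
  simp_rw [this]
  exact T2_le hk A₀ S₀ φ

lemma split_term (hk : 1 ≤ k) (A₀ : {s : Finset (Fin n) // s.card = k})
    (φ : {s : Finset (Fin n) // s.card = k} → ℝ)
    (S : {s : Finset (Fin n) // s.card = k - 1}) (u v : Fin n) :
    (if G.Adj u v then
        ((if u ∈ S.1 then 0 else φ (tokIns hk A₀ S u)) -
         (if v ∈ S.1 then 0 else φ (tokIns hk A₀ S v)))^2 else 0) =
    (if G.Adj u v ∧ u ∉ S.1 ∧ v ∉ S.1 then
        (φ (tokIns hk A₀ S u) - φ (tokIns hk A₀ S v))^2 else 0) +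
    (if G.Adj u v ∧ u ∈ S.1 ∧ v ∉ S.1 then (φ (tokIns hk A₀ S v))^2 else 0) +
    (if G.Adj u v ∧ u ∉ S.1 ∧ v ∈ S.1 then (φ (tokIns hk A₀ S u))^2 else 0) := by
  by_cases h1 : G.Adj u v
  · by_cases h2 : u ∈ S.1 <;> by_cases h3 : v ∈ S.1 <;>
      simp only [h1, h2, h3, if_true, if_false, true_and, and_true, if_pos, if_neg,
        not_true, not_false_iff, false_and, and_false] <;> simp <;> ring
  · simp [h1]

end t2

/-- If `λ` is an eigenvalue of `L_k(G)` with an eigenvector `φ` satisfying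
`B_{n,k,k-1}ᵀ φ = 0`, then `λ ≥ k (λ₂(L(G)) - k + 1)`. -/
theorem token_eigenvalue_lower (n k : ℕ) (G : SimpleGraph (Fin n)) [DecidableRel G.Adj]
    (hk : 1 ≤ k) (hkn : k ≤ n / 2) (lam : ℝ)
    (φ : {s : Finset (Fin n) // s.card = k} → ℝ) (hφ0 : φ ≠ 0)
    (hφ : lapTok n k G *ᵥ φ = lam • φ)
    (hker : (inclMatrix n k (k - 1))ᵀ *ᵥ φ = 0) :
    lam ≥ (k : ℝ) *
      (lamSecond (SimpleGraph.posSemidef_lapMatrix ℝ G).isHermitian - (k : ℝ) + 1) := by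
  classical
  have hn2 : 2 ≤ n := by omega
  haveI : Nonempty (Fin n) := ⟨⟨0, by omega⟩⟩
  have hkn' : k ≤ n := by omega
  obtain ⟨A₀s, _, hA₀⟩ := Finset.exists_subset_card_eq (s := (Finset.univ : Finset (Fin n))) (n := k)
    (by simpa using hkn')
  obtain ⟨S₀s, _, hS₀⟩ := Finset.exists_subset_card_eq (s := (Finset.univ : Finset (Fin n))) (n := k - 1)
    (by simp; omega)
  set A₀ : {s : Finset (Fin n) // s.card = k} := ⟨A₀s, hA₀⟩ with hA₀def
  set S₀ : {s : Finset (Fin n) // s.card = k - 1} := ⟨S₀s, hS₀⟩ with hS₀def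
  set lam2 := lamSecond (SimpleGraph.posSemidef_lapMatrix ℝ G).isHermitian with hlam2def
  set N := ∑ A : {s : Finset (Fin n) // s.card = k}, φ A ^ 2 with hN
  have hNpos : 0 < N := by
    rw [hN]
    apply Finset.sum_pos' (fun A _ => sq_nonneg _)
    obtain ⟨A, hA⟩ := Function.ne_iff.mp hφ0
    have hA' : φ A ≠ 0 := by simpa using hA
    exact ⟨A, Finset.mem_univ A, by positivity⟩
  set y : {s : Finset (Fin n) // s.card = k - 1} → Fin n → ℝ :=
    fun S w => if w ∈ S.1 then 0 else φ (tokIns hk A₀ S w) with hy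
  have hsum0 : ∀ S, ∑ w, y S w = 0 := by
    intro S
    have h1 := congrFun hker S
    simp only [Matrix.mulVec, dotProduct, Matrix.transpose_apply, inclMatrix,
      Pi.zero_apply, ite_mul, one_mul, zero_mul] at h1
    simp only [hy]
    rw [sum_row hk A₀ S φ]
    exact h1
  have hray : ∀ S, lam2 * (y S ⬝ᵥ y S) ≤ y S ⬝ᵥ (G.lapMatrix ℝ *ᵥ y S) :=
    fun S => rayleigh G (y S) (hsum0 S)
  have hyy : ∑ S, (y S ⬝ᵥ y S) = (k : ℝ) * N := by
    have h1 : ∀ S, y S ⬝ᵥ y S =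
        ∑ v, (if v ∈ S.1 then 0 else (φ (tokIns hk A₀ S v))^2) := by
      intro S
      simp only [dotProduct, hy]
      refine Finset.sum_congr rfl fun v _ => ?_
      split_ifs with h
      · ring
      · exact (sq _).symm
    simp_rw [h1]
    rw [hN]
    exact sum_ins hk A₀ S₀ (fun A => φ A ^ 2)
  have hedge : ∀ S, y S ⬝ᵥ (G.lapMatrix ℝ *ᵥ y S) =
      (∑ u, ∑ v, if G.Adj u v then (y S u - y S v)^2 else 0) / 2 := by
    intro S
    rw [← Matrix.toLinearMap₂'_apply', SimpleGraph.lapMatrix_toLinearMap₂']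
  have hsplit : ∑ S, ∑ u, ∑ v, (if G.Adj u v then (y S u - y S v)^2 else 0) =
      (∑ S : {s : Finset (Fin n) // s.card = k - 1}, ∑ u : Fin n, ∑ v : Fin n,
        (if G.Adj u v ∧ u ∉ S.1 ∧ v ∉ S.1 then
          (φ (tokIns hk A₀ S u) - φ (tokIns hk A₀ S v))^2 else 0)) +
      (∑ S : {s : Finset (Fin n) // s.card = k - 1}, ∑ u : Fin n, ∑ v : Fin n,
        (if G.Adj u v ∧ u ∈ S.1 ∧ v ∉ S.1 then (φ (tokIns hk A₀ S v))^2 else 0)) +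
      (∑ S : {s : Finset (Fin n) // s.card = k - 1}, ∑ u : Fin n, ∑ v : Fin n,
        (if G.Adj u v ∧ u ∉ S.1 ∧ v ∈ S.1 then (φ (tokIns hk A₀ S u))^2 else 0)) := by
    simp only [hy]
    simp_rw [split_term hk A₀ φ, Finset.sum_add_distrib]
  have hQT : (∑ A : {s : Finset (Fin n) // s.card = k},
      ∑ B : {s : Finset (Fin n) // s.card = k},
        (if (tokenGraph n k G).Adj A B then (φ A - φ B)^2 else 0)) = 2 * (lam * N) := by
    have h1 : φ ⬝ᵥ (lapTok n k G *ᵥ φ) =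
        (∑ A : {s : Finset (Fin n) // s.card = k}, ∑ B : {s : Finset (Fin n) // s.card = k},
          (if (tokenGraph n k G).Adj A B then (φ A - φ B)^2 else 0)) / 2 := by
      rw [lapTok, ← Matrix.toLinearMap₂'_apply', SimpleGraph.lapMatrix_toLinearMap₂']
    have h2 : φ ⬝ᵥ (lapTok n k G *ᵥ φ) = lam * N := by
      rw [hφ, hN]
      simp only [dotProduct, Pi.smul_apply, smul_eq_mul, Finset.mul_sum]
      exact Finset.sum_congr rfl fun A _ => by ring
    rw [h2] at h1
    linarith
  have main : lam2 * ((k : ℝ) * N) ≤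
      (2 * (lam * N) + ((k : ℝ) - 1) * ((k : ℝ) * N) + ((k : ℝ) - 1) * ((k : ℝ) * N)) / 2 := by
    have e1 : (∑ S : {s : Finset (Fin n) // s.card = k - 1}, ∑ u : Fin n, ∑ v : Fin n,
        (if G.Adj u v ∧ u ∉ S.1 ∧ v ∉ S.1 then
          (φ (tokIns hk A₀ S u) - φ (tokIns hk A₀ S v))^2 else 0)) = 2 * (lam * N) := by
      rw [T1_eq hk A₀ φ]; exact hQT
    have e2 := T2_le (G := G) hk A₀ S₀ φ
    have e3 := T3_le (G := G) hk A₀ S₀ φ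
    rw [← hN] at e2 e3
    calc lam2 * ((k : ℝ) * N) = ∑ S, lam2 * (y S ⬝ᵥ y S) := by
          rw [← Finset.mul_sum, hyy]
      _ ≤ ∑ S, y S ⬝ᵥ (G.lapMatrix ℝ *ᵥ y S) := Finset.sum_le_sum fun S _ => hray S
      _ = (∑ S, ∑ u, ∑ v, if G.Adj u v then (y S u - y S v)^2 else 0) / 2 := by
          simp_rw [hedge]
          rw [Finset.sum_div]
      _ ≤ _ := by
          rw [hsplit]
          linarith [e1, e2, e3]
  have hfin : lam2 * (k : ℝ) ≤ lam + ((k : ℝ) - 1) * (k : ℝ) := by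
    have h'' : (lam2 * (k : ℝ)) * N ≤ (lam + ((k : ℝ) - 1) * (k : ℝ)) * N := by
      ring_nf at main ⊢
      linarith [main]
    exact (mul_le_mul_iff_of_pos_right hNpos).mp h''
  rw [ge_iff_le]
  nlinarith [hfin]
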